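/- Let x, y ∈ ℝ^n. If xᵀ(vvᵀ)x ≤ yᵀ(vvᵀ)y for every vector v ∈ ℝ^n (i.e., (vᵀx)² ≤ (vᵀy)² for all v), and additionally xᵀx ≤ yᵀy, then there exists α ∈ ℝ with −1 ≤ α ≤ 1 such that x = α y. In other words, in the characterization of collinearity with scale factor in [−1,1], it suffices to test only rank-one positive semidefinite matrices N = vvᵀ together with the identity matrix N = I. -/

import Mathlib

open Matrix

lemma dp_self_nonneg (n : ℕ) (v : Fin n → ℝ) : 0 ≤ v ⬝ᵥ v :=
  Finset.sum_nonneg fun i _ => mul_self_nonneg _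

lemma quad_eq (n : ℕ) (v x : Fin n → ℝ) :
    x ⬝ᵥ ((vecMulVec v v) *ᵥ x) = (v ⬝ᵥ x) * (v ⬝ᵥ x) := by
  simp only [dotProduct, mulVec, vecMulVec_apply, Finset.sum_mul, Finset.mul_sum]
  rw [Finset.sum_comm]
  congr 1; ext i; congr 1; ext j; ring

/-- It suffices to test rank-one PSD matrices `N = vvᵀ` together with the
identity: if `xᵀ(vvᵀ)x ≤ yᵀ(vvᵀ)y` for every `v` and `xᵀx ≤ yᵀy`, then
`x = α • y` for some `α ∈ [-1, 1]`. -/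
theorem collinear_of_rankOne_quadForm_le (n : ℕ) (x y : Fin n → ℝ)
    (hrank1 : ∀ v : Fin n → ℝ,
      x ⬝ᵥ ((vecMulVec v v) *ᵥ x) ≤ y ⬝ᵥ ((vecMulVec v v) *ᵥ y))
    (hid : x ⬝ᵥ x ≤ y ⬝ᵥ y) :
    ∃ α : ℝ, -1 ≤ α ∧ α ≤ 1 ∧ x = α • y := by
  have key : ∀ v : Fin n → ℝ, (v ⬝ᵥ x) * (v ⬝ᵥ x) ≤ (v ⬝ᵥ y) * (v ⬝ᵥ y) := by
    intro v; have := hrank1 v; rwa [quad_eq, quad_eq] at this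
  by_cases hy : y = 0
  · refine ⟨0, by norm_num, by norm_num, ?_⟩
    have hx := key x
    simp [hy] at hx
    have hxx : x ⬝ᵥ x = 0 := by
      nlinarith [dp_self_nonneg n x]
    have := (dotProduct_self_eq_zero (v := x)).mp hxx
    simp [this, hy]
  · have hyy : (0:ℝ) < y ⬝ᵥ y := by
      rcases lt_or_eq_of_le (dp_self_nonneg n y) with h | h
      · exact h
      · exact absurd ((dotProduct_self_eq_zero (v := y)).mp h.symm) hy
    set α : ℝ := (y ⬝ᵥ x) / (y ⬝ᵥ y) with hα
    set w : Fin n → ℝ := x - α • y with hw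
    have hwy : y ⬝ᵥ w = 0 := by
      simp [hw, dotProduct_sub, dotProduct_smul, hα, smul_eq_mul]
      field_simp
      ring
    have hwx : w ⬝ᵥ x = w ⬝ᵥ w := by
      have : w ⬝ᵥ (α • y) = 0 := by
        rw [dotProduct_smul, dotProduct_comm, hwy]; simp
      have hxy : y ⬝ᵥ x = α * (y ⬝ᵥ y) := by
        rw [hα]; field_simp
      simp [hw, dotProduct_sub, dotProduct_smul, smul_eq_mul, dotProduct_comm x y, hxy]
    have hw0 : w = 0 := by
      have h1 := key w
      rw [hwx] at h1
      have h2 : w ⬝ᵥ y = 0 := by rw [dotProduct_comm]; exact hwy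
      rw [h2] at h1
      have : w ⬝ᵥ w = 0 := by nlinarith [dp_self_nonneg n w]
      exact (dotProduct_self_eq_zero (v := w)).mp this
    have hxαy : x = α • y := by
      have := sub_eq_zero.mp hw0
      simpa [hw] using this
    have hα2 : α ^ 2 ≤ 1 := by
      have h1 := key y
      rw [hxαy] at h1
      simp only [dotProduct_smul, smul_eq_mul] at h1
      nlinarith [mul_pos hyy hyy]
    have h1 : -1 ≤ α := by nlinarith
    have h2 : α ≤ 1 := by nlinarith
    exact ⟨α, h1, h2, hxαy⟩
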